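/- Let L be a distributive lattice, B ⊆ L a basis (containing ⊤, closed under meets, with every element of L a finite join of elements of B), C a complete category, and G : B^op → C a sheaf on B (G preserves the limit for every finite family of basis elements whose join lies in B). Then the right Kan extension Ran G of G along the inclusion B ↪ L is a sheaf on L, and it restricts to G up to natural isomorphism. -/

import Mathlib

open CategoryTheory CategoryTheory.Limits

universe w v u

section

variable {L : Type u} [DistribLattice L] [BoundedOrder L]
  {B : Type u} [SemilatticeInf B] [OrderTop B] (f : B →o L)

/-- The cocone in `L` over the pairwise diagram of a finite family `x : Fin n → L`,
with point the finite join `⋁ᵢ xᵢ`. -/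
def finJoinCocone {n : ℕ} (x : Fin n → L) :
    Cocone (Pairwise.diagram (fun i : ULift.{u} (Fin n) => x i.down)) where
  pt := Finset.univ.sup x
  ι :=
    { app := fun p =>
        homOfLE
          (match p with
          | .single i => Finset.le_sup (f := x) (Finset.mem_univ i.down)
          | .pair i _ =>
              inf_le_left.trans (Finset.le_sup (f := x) (Finset.mem_univ i.down)))
      naturality := fun _ _ _ => Subsingleton.elim _ _ }

/-- Given basis elements `b₁,…,bₙ` of `B` whose join in `L` is (the image of) `v ∈ B`,
the cocone in `B` over the pairwise diagram of the `bᵢ` with point `v`. -/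
def basisJoinCocone (hemb : ∀ a b : B, f a ≤ f b ↔ a ≤ b) {n : ℕ} (b : Fin n → B)
    (v : B) (hv : f v = Finset.univ.sup fun i => f (b i)) :
    Cocone (Pairwise.diagram (fun i : ULift.{u} (Fin n) => b i.down)) where
  pt := v
  ι :=
    { app := fun p =>
        homOfLE
          (match p with
          | .single i =>
              (hemb _ _).mp
                ((Finset.le_sup (f := fun i => f (b i)) (Finset.mem_univ i.down)).trans
                  hv.ge)
          | .pair i _ =>
              inf_le_left.trans
                ((hemb _ _).mp
                  ((Finset.le_sup (f := fun i => f (b i)) (Finset.mem_univ i.down)).trans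
                    hv.ge)))
      naturality := fun _ _ _ => Subsingleton.elim _ _ }

section Aux
open Opposite
set_option linter.unusedSectionVars false
variable {L : Type u} [DistribLattice L] [BoundedOrder L]
  {B : Type u} [SemilatticeInf B] [OrderTop B] (f : B →o L)

instance psubs {P : Type*} [Preorder P] (X Y : Pᵒᵖ) : Subsingleton (X ⟶ Y) :=
  ⟨fun u v => Quiver.Hom.unop_inj (Subsingleton.elim _ _)⟩

variable {C : Type w} [Category.{v} C] (G : Bᵒᵖ ⥤ C) (RG : Lᵒᵖ ⥤ C)
  (α : f.monotone.functor.op ⋙ RG ⟶ G)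

/-- projection RG(y) → G(e) for f e ≤ y -/
def pr (y : L) (e : B) (h : f e ≤ y) : RG.obj (op y) ⟶ G.obj (op e) :=
  RG.map (homOfLE h : f.monotone.functor.obj e ⟶ y).op ≫ α.app (op e)

lemma pr_comp {y : L} {e e' : B} (h : f e ≤ y) (h' : e' ≤ e) :
    pr f G RG α y e h ≫ G.map (homOfLE h').op = pr f G RG α y e' ((f.monotone h').trans h) := by
  unfold pr
  rw [Category.assoc, ← α.naturality (homOfLE h').op, Functor.comp_map]
  rw [← Functor.map_comp_assoc]
  congr 1

lemma pr_res {y y' : L} {e : B} (hy : y' ≤ y) (h : f e ≤ y') :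
    RG.map (homOfLE hy).op ≫ pr f G RG α y' e h = pr f G RG α y e (h.trans hy) := by
  unfold pr
  rw [← Functor.map_comp_assoc]
  congr 1

variable (hpt : ∀ y : L, IsLimit ((Functor.RightExtension.mk RG α).coneAt (op y)))
include hpt

lemma RGhom_ext {Z : C} {y : L} {u₁ u₂ : Z ⟶ RG.obj (op y)}
    (h : ∀ (e : B) (he : f e ≤ y), u₁ ≫ pr f G RG α y e he = u₂ ≫ pr f G RG α y e he) :
    u₁ = u₂ := by
  apply (hpt y).hom_ext
  intro g
  have he : f g.right.unop ≤ y := leOfHom g.hom.unop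
  have hg : g.hom = (homOfLE he).op := Subsingleton.elim _ _
  have := h g.right.unop he
  dsimp [pr] at this ⊢
  exact this

lemma RGlift {Z : C} (y : L) (s : ∀ (e : B), f e ≤ y → (Z ⟶ G.obj (op e)))
    (hs : ∀ (e e' : B) (h' : e' ≤ e) (he : f e ≤ y),
      s e he ≫ G.map (homOfLE h').op = s e' ((f.monotone h').trans he)) :
    ∃ ℓ : Z ⟶ RG.obj (op y), ∀ (e : B) (he : f e ≤ y), ℓ ≫ pr f G RG α y e he = s e he := by
  let cone : Cone (StructuredArrow.proj (op y) f.monotone.functor.op ⋙ G) :=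
    { pt := Z
      π :=
        { app := fun g => s g.right.unop (leOfHom g.hom.unop)
          naturality := fun g g' φ => by
            dsimp
            erw [Category.id_comp]
            exact (hs _ _ (leOfHom φ.right.unop) _).symm } }
  refine ⟨(hpt y).lift cone, fun e he => ?_⟩
  have := (hpt y).fac cone (StructuredArrow.mk (Y := op e) (homOfLE he).op)
  dsimp at this
  dsimp [pr]
  exact this
end Aux
section AuxG
open Opposite
set_option linter.unusedSectionVars false
variable {L : Type u} [DistribLattice L] [BoundedOrder L]
  {B : Type u} [SemilatticeInf B] [OrderTop B] (f : B →o L)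
variable {C : Type w} [Category.{v} C] (G : Bᵒᵖ ⥤ C) (RG : Lᵒᵖ ⥤ C)
  (α : f.monotone.functor.op ⋙ RG ⟶ G)
section GExt
variable (hemb : ∀ a b : B, f a ≤ f b ↔ a ≤ b)

lemma Ghom_ext {n : ℕ} {bb : Fin n → B} {v : B}
    {hv : f v = Finset.univ.sup fun i => f (bb i)}
    (hl : IsLimit (G.mapCone (basisJoinCocone f hemb bb v hv).op))
    {Z : C} {u₁ u₂ : Z ⟶ G.obj (op v)}
    (h : ∀ (k : Fin n) (hk : bb k ≤ v),
      u₁ ≫ G.map (homOfLE hk).op = u₂ ≫ G.map (homOfLE hk).op) : u₁ = u₂ := by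
  have hbk : ∀ k : Fin n, bb k ≤ v := fun k =>
    (hemb _ _).mp ((Finset.le_sup (f := fun i => f (bb i)) (Finset.mem_univ k)).trans hv.ge)
  apply hl.hom_ext
  rintro ⟨p⟩
  cases p with
  | single k =>
      have e1 : (basisJoinCocone f hemb bb v hv).ι.app (.single k) = homOfLE (hbk k.down) :=
        Subsingleton.elim _ _
      dsimp
      rw [e1]
      exact h _ _
  | pair k l =>
      have e1 : (basisJoinCocone f hemb bb v hv).ι.app (.pair k l)
          = homOfLE (inf_le_left : bb k.down ⊓ bb l.down ≤ _) ≫ homOfLE (hbk k.down) :=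
        Subsingleton.elim _ _
      dsimp
      erw [e1, op_comp, Functor.map_comp, ← Category.assoc, ← Category.assoc, h _ _]
      rfl

lemma Glift {n : ℕ} {bb : Fin n → B} {v : B}
    {hv : f v = Finset.univ.sup fun i => f (bb i)}
    (hl : IsLimit (G.mapCone (basisJoinCocone f hemb bb v hv).op))
    {Z : C} (w : ∀ k : Fin n, Z ⟶ G.obj (op (bb k)))
    (hw : ∀ k l : Fin n, w k ≫ G.map (homOfLE (inf_le_left : bb k ⊓ bb l ≤ bb k)).op
        = w l ≫ G.map (homOfLE (inf_le_right : bb k ⊓ bb l ≤ bb l)).op) :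
    ∃ ℓ : Z ⟶ G.obj (op v), ∀ (k : Fin n) (hk : bb k ≤ v),
      ℓ ≫ G.map (homOfLE hk).op = w k := by
  let wa : ∀ p : Pairwise (ULift.{u} (Fin n)),
      Z ⟶ G.obj (op ((Pairwise.diagram fun i : ULift.{u} (Fin n) => bb i.down).obj p)) :=
    fun p => match p with
    | .single i => w i.down
    | .pair i j => w i.down ≫ G.map (homOfLE inf_le_left).op
  let cone : Cone ((Pairwise.diagram fun i : ULift.{u} (Fin n) => bb i.down).op ⋙ G) :=
    { pt := Z
      π :=
        { app := fun P => wa P.unop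
          naturality := by
            rintro ⟨p⟩ ⟨p'⟩ m
            obtain ⟨m⟩ := m
            change Pairwise.Hom _ _ at m
            cases m with
            | id_single i =>
                simp [wa]
                erw [Category.id_comp, op_id, G.map_id, Category.comp_id]
            | id_pair i j =>
                simp [wa]
                erw [op_id, G.map_id, Category.comp_id]
            | left i j =>
                simp [wa]
                rfl
            | right i j =>
                simp [wa]
                exact hw i.down j.down } }
  refine ⟨hl.lift cone, fun k hk => ?_⟩
  have := hl.fac cone (op (.single ⟨k⟩))
  dsimp at this
  have e1 : (basisJoinCocone f hemb bb v hv).ι.app (.single ⟨k⟩) = homOfLE hk :=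
    Subsingleton.elim _ _
  rw [e1] at this
  exact this
end GExt
end AuxG
section Aux2
open Opposite
set_option linter.unusedSectionVars false
variable {L : Type u} [DistribLattice L] [BoundedOrder L]
  {B : Type u} [SemilatticeInf B] [OrderTop B] (f : B →o L)
variable {C : Type w} [Category.{v} C] (G : Bᵒᵖ ⥤ C) (RG : Lᵒᵖ ⥤ C)
  (α : f.monotone.functor.op ⋙ RG ⟶ G)
variable {n : ℕ} {x : Fin n → L}
  (cn : Cone ((Pairwise.diagram fun i : ULift.{u} (Fin n) => x i.down).op ⋙ RG))

/-- the composite projection from a cone to `G e` through the `i`-th component -/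
def qmap (i : Fin n) (e : B) (h : f e ≤ x i) : cn.pt ⟶ G.obj (op e) :=
  cn.π.app (op (.single ⟨i⟩)) ≫ pr f G RG α (x i) e h

lemma qmap_comp (i : Fin n) {e e' : B} (h : f e ≤ x i) (h' : e' ≤ e) :
    qmap f G RG α cn i e h ≫ G.map (homOfLE h').op
      = qmap f G RG α cn i e' ((f.monotone h').trans h) := by
  dsimp [qmap]
  erw [Category.assoc, pr_comp]

lemma qmap_pair (i i' : Fin n) (e : B) (h : f e ≤ x i ⊓ x i') :
    cn.π.app (op (.pair ⟨i⟩ ⟨i'⟩)) ≫ pr f G RG α (x i ⊓ x i') e h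
      = qmap f G RG α cn i e (h.trans inf_le_left) := by
  rw [← cn.w (Quiver.Hom.op (Pairwise.Hom.left (ULift.up i) (ULift.up i') : Pairwise.pair (ULift.up i) (ULift.up i') ⟶ Pairwise.single (ULift.up i)))]
  dsimp [qmap]
  erw [Category.assoc, pr_res]
  rfl

lemma qmap_pair' (i i' : Fin n) (e : B) (h : f e ≤ x i ⊓ x i') :
    cn.π.app (op (.pair ⟨i⟩ ⟨i'⟩)) ≫ pr f G RG α (x i ⊓ x i') e h
      = qmap f G RG α cn i' e (h.trans inf_le_right) := by
  rw [← cn.w (Quiver.Hom.op (Pairwise.Hom.right (ULift.up i) (ULift.up i') : Pairwise.pair (ULift.up i) (ULift.up i') ⟶ Pairwise.single (ULift.up i')))]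
  dsimp [qmap]
  erw [Category.assoc, pr_res]
  rfl

lemma qmap_indep (i i' : Fin n) (e : B) (h : f e ≤ x i) (h' : f e ≤ x i') :
    qmap f G RG α cn i e h = qmap f G RG α cn i' e h' :=
  (qmap_pair f G RG α cn i i' e (le_inf h h')).symm.trans
    (qmap_pair' f G RG α cn i i' e (le_inf h h'))
end Aux2
set_option maxHeartbeats 1000000 in
set_option synthInstance.maxHeartbeats 200000 in
open Opposite in
/-- Let `B` be a basis of a distributive lattice `L` (an order-embedded meet-subsemilattice
containing `⊤`, such that every element of `L` is a finite join of elements of `B`), let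
`C` be a complete category and let `G` be a sheaf on the basis `B`.  Then any (pointwise)
right Kan extension of `G` along the inclusion `B ↪ L` is a sheaf on `L` and restricts to
`G` up to natural isomorphism. -/
theorem ran_basis_sheaf_is_sheaf
    {C : Type w} [Category.{v} C] [HasLimitsOfSize.{u, u} C]
    (hemb : ∀ a b : B, f a ≤ f b ↔ a ≤ b) (htop : f ⊤ = ⊤)
    (hinf : ∀ a b : B, f (a ⊓ b) = f a ⊓ f b)
    (hbasis : ∀ x : L, ∃ (n : ℕ) (b : Fin n → B),
      x = Finset.univ.sup fun i => f (b i))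
    (G : Bᵒᵖ ⥤ C)
    (hG : ∀ (n : ℕ) (b : Fin n → B) (v : B)
      (hv : f v = Finset.univ.sup fun i => f (b i)),
      Nonempty (IsLimit (G.mapCone (basisJoinCocone f hemb b v hv).op)))
    (RG : Lᵒᵖ ⥤ C) (α : f.monotone.functor.op ⋙ RG ⟶ G)
    [RG.IsRightKanExtension α] :
    (∀ (n : ℕ) (x : Fin n → L),
        Nonempty (IsLimit (RG.mapCone (finJoinCocone x).op))) ∧
      Nonempty (f.monotone.functor.op ⋙ RG ≅ G) := by
  classical
  haveI : f.monotone.functor.Full :=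
    ⟨fun {a b} g => ⟨homOfLE ((hemb a b).mp (leOfHom g)), Subsingleton.elim _ _⟩⟩
  haveI : f.monotone.functor.Faithful := ⟨fun _ => Subsingleton.elim _ _⟩
  haveI hpw : Functor.HasPointwiseRightKanExtension f.monotone.functor.op G :=
    fun Y => inferInstance
  have hpt := Functor.isPointwiseRightKanExtensionOfIsRightKanExtension RG α
  have hpt' : ∀ y : L, IsLimit ((Functor.RightExtension.mk RG α).coneAt (op y)) :=
    fun y => hpt (op y)
  haveI : IsIso α := hpt.isIso_hom
  refine ⟨?_, ⟨asIso α⟩⟩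
  intro n x
  choose m c hc using fun i : Fin n => hbasis (x i)
  set X := Finset.univ.sup x with hXdef
  let κ := (i : Fin n) × Fin (m i)
  let N := Fintype.card κ
  let eqv : κ ≃ Fin N := Fintype.equivFin κ
  let ii : Fin N → Fin n := fun k => (eqv.symm k).1
  let cc : Fin N → B := fun k => c (ii k) (eqv.symm k).2
  have hcc : ∀ k, f (cc k) ≤ x (ii k) := fun k => by
    rw [hc (ii k)]
    exact Finset.le_sup (f := fun j => f (c (ii k) j)) (Finset.mem_univ (eqv.symm k).2)
  have hxX : ∀ i, x i ≤ X := fun i => Finset.le_sup (Finset.mem_univ i)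
  have hcov : ∀ b : B, f b ≤ X → f b = Finset.univ.sup fun k : Fin N => f (b ⊓ cc k) := by
    intro b hb
    have h1 : f b = Finset.univ.sup (fun i : Fin n =>
        Finset.univ.sup fun j : Fin (m i) => f (b ⊓ c i j)) :=
      calc f b = f b ⊓ Finset.univ.sup x := (inf_eq_left.mpr hb).symm
        _ = Finset.univ.sup fun i => f b ⊓ x i := Finset.sup_inf_distrib_left _ _ _
        _ = _ := Finset.sup_congr rfl fun i _ => by
              rw [hc i, Finset.sup_inf_distrib_left]
              exact Finset.sup_congr rfl fun j _ => (hinf b (c i j)).symm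
    rw [h1]
    apply le_antisymm
    · apply Finset.sup_le; intro i _
      apply Finset.sup_le; intro j _
      have := Finset.le_sup (f := fun k : Fin N => f (b ⊓ cc k))
        (Finset.mem_univ (eqv ⟨i, j⟩))
      have h2 : eqv.symm (eqv ⟨i, j⟩) = ⟨i, j⟩ := Equiv.symm_apply_apply _ _
      simp only [cc, ii] at this ⊢
      rw [h2] at this
      exact this
    · apply Finset.sup_le; intro k _
      exact le_trans
        (Finset.le_sup (f := fun j => f (b ⊓ c (ii k) j)) (Finset.mem_univ (eqv.symm k).2))
        (Finset.le_sup (f := fun i => Finset.univ.sup fun j => f (b ⊓ c i j))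
          (Finset.mem_univ (ii k)))
  have hG' : ∀ (b : B) (hb : f b ≤ X),
      IsLimit (G.mapCone (basisJoinCocone f hemb (fun k => b ⊓ cc k) b (hcov b hb)).op) :=
    fun b hb => (hG N (fun k => b ⊓ cc k) b (hcov b hb)).some
  refine ⟨IsLimit.ofExistsUnique fun cn => ?_⟩
  -- existence of the compatible family into G
  have hsex : ∀ (b : B) (hb : f b ≤ X), ∃ sb : cn.pt ⟶ G.obj (op b),
      ∀ (k : Fin N) (hk : b ⊓ cc k ≤ b), sb ≫ G.map (homOfLE hk).op
        = qmap f G RG α cn (ii k) (b ⊓ cc k) ((f.monotone inf_le_right).trans (hcc k)) := by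
    intro b hb
    apply Glift f G hemb (hG' b hb)
    intro k l
    rw [qmap_comp, qmap_comp]
    exact qmap_indep f G RG α cn (ii k) (ii l) _ _ _
  choose s hs using hsex
  have key : ∀ (b : B) (hb : f b ≤ X) (e : B) (he : e ≤ b) (i : Fin n) (hei : f e ≤ x i),
      s b hb ≫ G.map (homOfLE he).op = qmap f G RG α cn i e hei := by
    intro b hb e he i hei
    have hbe : f e ≤ X := hei.trans (hxX i)
    apply Ghom_ext f G hemb (hG' e hbe)
    intro k hk
    rw [Category.assoc, ← Functor.map_comp, ← op_comp,
      show (homOfLE hk ≫ homOfLE he : (e ⊓ cc k : B) ⟶ b)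
        = homOfLE (inf_le_inf he le_rfl) ≫ homOfLE inf_le_left from Subsingleton.elim _ _,
      op_comp, Functor.map_comp, ← Category.assoc, hs b hb k inf_le_left, qmap_comp,
      qmap_comp]
    exact qmap_indep f G RG α cn (ii k) i _ _ _
  have scompat : ∀ (e e' : B) (h' : e' ≤ e) (he : f e ≤ X),
      s e he ≫ G.map (homOfLE h').op = s e' ((f.monotone h').trans he) := by
    intro b b' h' hb
    apply Ghom_ext f G hemb (hG' b' ((f.monotone h').trans hb))
    intro k hk
    rw [Category.assoc, ← Functor.map_comp, ← op_comp,
      show (homOfLE hk ≫ homOfLE h' : (b' ⊓ cc k : B) ⟶ b)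
        = homOfLE (hk.trans h') from Subsingleton.elim _ _,
      key b hb (b' ⊓ cc k) (hk.trans h') (ii k) ((f.monotone inf_le_right).trans (hcc k)),
      hs b' ((f.monotone h').trans hb) k hk]
  obtain ⟨ℓ, hℓ⟩ := RGlift f G RG α hpt' X s scompat
  have keyq : ∀ (i : Fin n) (e : B) (he : f e ≤ x i),
      s e (he.trans (hxX i)) = qmap f G RG α cn i e he := by
    intro i e he
    have := key e (he.trans (hxX i)) e le_rfl i he
    simpa using this
  refine ⟨ℓ, ?_, ?_⟩
  · rintro ⟨p⟩
    cases p with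
    | single i =>
        apply RGhom_ext f G RG α hpt'
        intro e he
        have hmap : ((finJoinCocone x).ι.app (.single i)) = homOfLE (hxX i.down) :=
          Subsingleton.elim _ _
        dsimp
        erw [hmap, Category.assoc, pr_res]
        exact (hℓ e (le_trans he (hxX i.down))).trans (keyq i.down e he)
    | pair i j =>
        apply RGhom_ext f G RG α hpt'
        intro e he
        have hmap : ((finJoinCocone x).ι.app (.pair i j))
            = homOfLE ((inf_le_left.trans (hxX i.down)) :
                x i.down ⊓ x j.down ≤ X) := Subsingleton.elim _ _
        dsimp
        erw [hmap, Category.assoc, pr_res]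
        exact (hℓ e (le_trans he (le_trans inf_le_left (hxX i.down)))).trans
          ((keyq i.down e (le_trans he inf_le_left)).trans
            (qmap_pair f G RG α cn i.down j.down e he).symm)
  · intro ℓ' hℓ'
    apply RGhom_ext f G RG α hpt'
    intro b hb
    have hb' : f b ≤ X := hb
    have t : ℓ' ≫ pr f G RG α X b hb' = s b hb' := by
      apply Ghom_ext f G hemb (hG' b hb')
      intro k hk
      erw [Category.assoc, pr_comp, ← pr_res f G RG α (hxX (ii k)), ← Category.assoc]
      have h3 : ℓ' ≫ RG.map (homOfLE (hxX (ii k))).op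
          = cn.π.app (op (Pairwise.single (ULift.up (ii k)))) :=
        hℓ' (op (Pairwise.single (ULift.up (ii k))))
      erw [h3, hs b hb' k hk]
      rfl
    exact t.trans (hℓ b hb').symm
end
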